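/- Let U ⊆ ℂ² be a polydisc centered at 0, W = (ω_1,…,ω_k) a k-web on U, X a transverse infinitesimal automorphism of W, u_1,…,u_k the canonical first integrals of ω_1,…,ω_k with respect to X, and x̃ a first integral of X (holomorphic with x̃(0) = 0, X(x̃) = 0 and dx̃(0) ≠ (0,0)). Then for each pair of indices i ≠ j there exist a neighborhood V of 0 and a holomorphic function g defined near 0 ∈ ℂ such that du_i − du_j = (g∘x̃)·dx̃ on V; in particular (du_i, −du_j, −(g∘x̃)·dx̃) is an abelian relation of the 3-web (ω_i, ω_j, ω_{k+1}) where ω_{k+1} := (−Q,P) for X = (P,Q). -/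

import Mathlib

open Complex Filter Topology

noncomputable section

/-- A point of the complex plane `ℂ²`. -/
abbrev Pt : Type := ℂ × ℂ

/-- A (holomorphic) 1-form `A dx + B dy` on (an open subset of) `ℂ²`,
identified with the pair of functions `(A, B)`. -/
abbrev Form1 : Type := (Pt → ℂ) × (Pt → ℂ)

/-- The complex partial derivative `∂f/∂x`. -/
noncomputable def pdx (f : Pt → ℂ) (p : Pt) : ℂ := fderiv ℂ f p (1, 0)

/-- The complex partial derivative `∂f/∂y`. -/
noncomputable def pdy (f : Pt → ℂ) (p : Pt) : ℂ := fderiv ℂ f p (0, 1)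

/-- The derivative `X(f) = P ∂f/∂x + Q ∂f/∂y` of `f` along the vector field `X = (P, Q)`. -/
noncomputable def Xf (P Q f : Pt → ℂ) (p : Pt) : ℂ := P p * pdx f p + Q p * pdy f p

/-- The contraction `i_X ω = A·P + B·Q` of the 1-form `ω = (A,B)` with `X = (P,Q)`. -/
noncomputable def contr (P Q : Pt → ℂ) (ω : Form1) (p : Pt) : ℂ := ω.1 p * P p + ω.2 p * Q p

/-- The wedge `ω ∧ ω' = A·B' − B·A'` of two 1-forms, as a function. -/
noncomputable def wedge (ω ω' : Form1) (p : Pt) : ℂ := ω.1 p * ω'.2 p - ω.2 p * ω'.1 p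

/-- The differential `df = (∂f/∂x, ∂f/∂y)` of a function. -/
noncomputable def fd (f : Pt → ℂ) : Form1 := (pdx f, pdy f)

/-- A 1-form `(A,B)` is closed on `U` if `∂A/∂y = ∂B/∂x` on `U`. -/
def IsClosedOn (ω : Form1) (U : Set Pt) : Prop := ∀ p ∈ U, pdy ω.1 p = pdx ω.2 p

/-- The Lie derivative `L_X ω` of the 1-form `ω = (A,B)` with respect to `X = (P,Q)`:
`L_X ω = (X(A) + A ∂P/∂x + B ∂Q/∂x, X(B) + A ∂P/∂y + B ∂Q/∂y)`. -/
noncomputable def lie (P Q : Pt → ℂ) (ω : Form1) : Form1 :=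
  (fun p => Xf P Q ω.1 p + ω.1 p * pdx P p + ω.2 p * pdx Q p,
   fun p => Xf P Q ω.2 p + ω.1 p * pdy P p + ω.2 p * pdy Q p)

/-- A 1-form is holomorphic on `U` if both its components are. -/
def AnalyticForm (ω : Form1) (U : Set Pt) : Prop :=
  AnalyticOnNhd ℂ ω.1 U ∧ AnalyticOnNhd ℂ ω.2 U
/-- A `k`-web on `U`: a `k`-tuple of holomorphic 1-forms, each nonvanishing on `U`,
pairwise transverse at the origin. -/
structure IsWeb {k : ℕ} (ω : Fin k → Form1) (U : Set Pt) : Prop where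
  analytic : ∀ i, AnalyticForm (ω i) U
  nonvanishing : ∀ i, ∀ p ∈ U, ((ω i).1 p, (ω i).2 p) ≠ (0, 0)
  transverse : ∀ i j, i ≠ j → wedge (ω i) (ω j) 0 ≠ 0

/-- An abelian relation `(η_1, …, η_k)` on `V` of the web given by `(ω_1, …, ω_k)`. -/
structure IsAbelianRelOn {k : ℕ} (ω : Fin k → Form1) (η : Fin k → Form1) (V : Set Pt) :
    Prop where
  analytic : ∀ i, AnalyticForm (η i) V
  closed : ∀ i, IsClosedOn (η i) V
  tangent : ∀ i, ∀ p ∈ V, wedge (η i) (ω i) p = 0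
  sum_fst : ∀ p ∈ V, ∑ i, (η i).1 p = 0
  sum_snd : ∀ p ∈ V, ∑ i, (η i).2 p = 0

/-- `U` is a polydisc centered at the origin. -/
def IsPolydisc (U : Set Pt) : Prop :=
  ∃ r s : ℝ, 0 < r ∧ 0 < s ∧ U = Metric.ball (0 : ℂ) r ×ˢ Metric.ball (0 : ℂ) s

/-- `X = (P,Q)` is an infinitesimal automorphism of the web `(ω_1, …, ω_k)` on `U`:
`(L_X ω_i) ∧ ω_i = 0` on `U` for all `i`. -/
def IsInfAut (P Q : Pt → ℂ) {k : ℕ} (ω : Fin k → Form1) (U : Set Pt) : Prop :=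
  ∀ i, ∀ p ∈ U, wedge (lie P Q (ω i)) (ω i) p = 0

/-- `X = (P,Q)` is transverse to the web `(ω_1, …, ω_k)` on `U`:
`i_X ω_i` is nonvanishing on `U` for all `i`. -/
def IsTransverseTo (P Q : Pt → ℂ) {k : ℕ} (ω : Fin k → Form1) (U : Set Pt) : Prop :=
  ∀ i, ∀ p ∈ U, contr P Q (ω i) p ≠ 0

/-- `u` is the canonical first integral of the 1-form `ω` with respect to `X = (P,Q)` on `U`:
`u` is holomorphic, `u(0) = 0` and `du = ω / (i_X ω)`. -/
def IsCanonicalFI (P Q : Pt → ℂ) (ω : Form1) (u : Pt → ℂ) (U : Set Pt) : Prop :=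
  AnalyticOnNhd ℂ u U ∧ u 0 = 0 ∧
    ∀ p ∈ U, pdx u p = ω.1 p / contr P Q ω p ∧ pdy u p = ω.2 p / contr P Q ω p

lemma clm_eval (L : Pt →L[ℂ] ℂ) (v : Pt) : L v = v.1 * L (1,0) + v.2 * L (0,1) := by
  have hv : v = v.1 • ((1:ℂ),(0:ℂ)) + v.2 • ((0:ℂ),(1:ℂ)) := by
    simp [Prod.ext_iff]
  conv_lhs => rw [hv, map_add, map_smul, map_smul]
  simp [smul_eq_mul]

lemma fderiv_eval (f : Pt → ℂ) (p v : Pt) :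
    fderiv ℂ f p v = v.1 * pdx f p + v.2 * pdy f p := clm_eval _ v

/-- the linear equivalence (v1,v2) ↦ (α v1 + β v2, v2) for α ≠ 0 -/
noncomputable def cle (α β : ℂ) (hα : α ≠ 0) : Pt ≃L[ℂ] Pt :=
  LinearEquiv.toContinuousLinearEquiv
  { toFun := fun v => (α * v.1 + β * v.2, v.2)
    map_add' := by intro a b; simp [Prod.ext_iff]; ring
    map_smul' := by intro c a; simp [Prod.ext_iff, smul_eq_mul]; ring
    invFun := fun w => ((w.1 - β * w.2) / α, w.2)
    left_inv := by
      intro v; refine Prod.ext ?_ rfl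
      show (α * v.1 + β * v.2 - β * v.2) / α = v.1
      rw [div_eq_iff hα]; ring
    right_inv := by
      intro w; refine Prod.ext ?_ rfl
      show α * ((w.1 - β * w.2) / α) + β * w.2 = w.1
      rw [mul_div_assoc', mul_comm α, mul_div_assoc, div_self hα, mul_one, sub_add_cancel] }

@[simp] lemma cle_apply (α β : ℂ) (hα : α ≠ 0) (v : Pt) :
    cle α β hα v = (α * v.1 + β * v.2, v.2) := rfl

@[simp] lemma cle_symm_apply (α β : ℂ) (hα : α ≠ 0) (w : Pt) :
    (cle α β hα).symm w = ((w.1 - β * w.2) / α, w.2) := rfl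

lemma hasFDerivAt_Phi {xt : Pt → ℂ} {p : Pt} (h : DifferentiableAt ℂ xt p)
    (hα : pdx xt p ≠ 0) :
    HasFDerivAt (fun q : Pt => (xt q, q.2))
      ((cle (pdx xt p) (pdy xt p) hα : Pt →L[ℂ] Pt)) p := by
  have h2 : HasFDerivAt (fun q : Pt => q.2) (ContinuousLinearMap.snd ℂ ℂ ℂ) p :=
    hasFDerivAt_snd
  have := h.hasFDerivAt.prodMk h2
  have heq : ((cle (pdx xt p) (pdy xt p) hα : Pt →L[ℂ] Pt))
      = (fderiv ℂ xt p).prod (ContinuousLinearMap.snd ℂ ℂ ℂ) := by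
    apply ContinuousLinearMap.ext; intro v
    have := fderiv_eval xt p v
    simp only [ContinuousLinearMap.prod_apply, ContinuousLinearMap.coe_snd']
    exact Prod.ext (by simpa [mul_comm] using this.symm) rfl
  rw [heq]; exact this

lemma AnalyticOnNhd.pdx' {h : Pt → ℂ} {s : Set Pt} (hh : AnalyticOnNhd ℂ h s) :
    AnalyticOnNhd ℂ (pdx h) s := fun p hp =>
  ((ContinuousLinearMap.apply ℂ ℂ (((1:ℂ),(0:ℂ)) : Pt)).analyticAt _).comp (hh.fderiv p hp)

lemma AnalyticOnNhd.pdy' {h : Pt → ℂ} {s : Set Pt} (hh : AnalyticOnNhd ℂ h s) :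
    AnalyticOnNhd ℂ (pdy h) s := fun p hp =>
  ((ContinuousLinearMap.apply ℂ ℂ (((0:ℂ),(1:ℂ)) : Pt)).analyticAt _).comp (hh.fderiv p hp)

/-- symmetry of second derivatives for an analytic function -/
lemma pdy_pdx_comm {h : Pt → ℂ} {p : Pt} (hh : AnalyticAt ℂ h p) :
    pdy (pdx h) p = pdx (pdy h) p := by
  have hev : ∀ᶠ y in 𝓝 p, HasFDerivAt h (fderiv ℂ h y) y := by
    filter_upwards [hh.eventually_analyticAt] with y hy using hy.differentiableAt.hasFDerivAt
  have hx : HasFDerivAt (fderiv ℂ h) (fderiv ℂ (fderiv ℂ h) p) p :=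
    hh.fderiv.differentiableAt.hasFDerivAt
  have symm := second_derivative_symmetric_of_eventually hev hx
  have e1 : HasFDerivAt (pdx h)
      ((ContinuousLinearMap.apply ℂ ℂ (((1:ℂ),(0:ℂ)) : Pt)).comp
        (fderiv ℂ (fderiv ℂ h) p)) p :=
    ((ContinuousLinearMap.apply ℂ ℂ (((1:ℂ),(0:ℂ)) : Pt)).hasFDerivAt).comp p hx
  have e2 : HasFDerivAt (pdy h)
      ((ContinuousLinearMap.apply ℂ ℂ (((0:ℂ),(1:ℂ)) : Pt)).comp
        (fderiv ℂ (fderiv ℂ h) p)) p :=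
    ((ContinuousLinearMap.apply ℂ ℂ (((0:ℂ),(1:ℂ)) : Pt)).hasFDerivAt).comp p hx
  have := symm (0,1) (1,0)
  calc pdy (pdx h) p = fderiv ℂ (fderiv ℂ h) p (0,1) (1,0) := by
        rw [pdy, e1.fderiv]; rfl
    _ = fderiv ℂ (fderiv ℂ h) p (1,0) (0,1) := this
    _ = pdx (pdy h) p := by rw [pdx, e2.fderiv]; rfl

lemma key {f xt : Pt → ℂ} {U' : Set Pt} (hUo : IsOpen U') (h0 : (0:Pt) ∈ U')
    (hf : AnalyticOnNhd ℂ f U') (hxt : AnalyticOnNhd ℂ xt U') (hxt0 : xt 0 = 0)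
    (hw : ∀ p ∈ U', pdx f p * pdy xt p - pdy f p * pdx xt p = 0)
    (hα : pdx xt 0 ≠ 0) :
    ∃ V, IsOpen V ∧ (0:Pt) ∈ V ∧ V ⊆ U' ∧ ∃ D : Set ℂ, IsOpen D ∧ (0:ℂ) ∈ D ∧
      ∃ g : ℂ → ℂ, AnalyticOnNhd ℂ g D ∧ (∀ p ∈ V, xt p ∈ D) ∧
      ∀ p ∈ V, pdx f p = g (xt p) * pdx xt p ∧ pdy f p = g (xt p) * pdy xt p := by
  set Φ : Pt → Pt := fun q => (xt q, q.2) with hΦdef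
  -- analyticity of Φ on U'
  have hΦan : ∀ p ∈ U', AnalyticAt ℂ Φ p := fun p hp => (hxt p hp).prod analyticAt_snd
  -- strict derivative at 0
  have hΦ0 : HasFDerivAt Φ ((cle (pdx xt 0) (pdy xt 0) hα : Pt →L[ℂ] Pt)) 0 :=
    hasFDerivAt_Phi (hxt 0 h0).differentiableAt hα
  have hΦstrict : HasStrictFDerivAt Φ ((cle (pdx xt 0) (pdy xt 0) hα : Pt →L[ℂ] Pt)) 0 := by
    have h1 := (hΦan 0 h0).hasStrictFDerivAt
    rwa [hΦ0.fderiv] at h1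
  set F := hΦstrict.toOpenPartialHomeomorph Φ with hFdef
  have hFcoe : (F : Pt → Pt) = Φ := hΦstrict.toOpenPartialHomeomorph_coe
  have hFs : (0:Pt) ∈ F.source := hΦstrict.mem_toOpenPartialHomeomorph_source
  have hΦ00 : Φ 0 = 0 := by simp [hΦdef, hxt0, Prod.ext_iff]
  have hFt : (0:Pt) ∈ F.target := by
    have := hΦstrict.image_mem_toOpenPartialHomeomorph_target
    rwa [hΦ00] at this
  -- W: good points
  set W : Set Pt := {p | p ∈ U' ∧ pdx xt p ≠ 0} with hWdef
  have hWo : IsOpen W := by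
    rw [isOpen_iff_mem_nhds]
    rintro p ⟨hp, hp2⟩
    have hc : ContinuousAt (pdx xt) p := (hxt.pdx' p hp).continuousAt
    filter_upwards [hUo.mem_nhds hp, hc.preimage_mem_nhds
      (isOpen_compl_singleton.mem_nhds (by simpa using hp2))] with q h1 h2
    exact ⟨h1, h2⟩
  have h0W : (0:Pt) ∈ W := ⟨h0, hα⟩
  -- S: open subset of target whose inverse image lands in W
  set S : Set Pt := F.target ∩ F.symm ⁻¹' W with hSdef
  have hSo : IsOpen S := F.symm.continuousOn.isOpen_inter_preimage F.open_target hWo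
  have h0S : (0:Pt) ∈ S := by
    refine ⟨hFt, ?_⟩
    have : F.symm (F 0) = 0 := F.left_inv hFs
    rw [hFcoe, hΦ00] at this
    simpa [this] using h0W
  obtain ⟨δ, hδ, hδS⟩ := Metric.isOpen_iff.1 hSo 0 h0S
  set T : Set Pt := Metric.ball (0:Pt) δ with hTdef
  have hTprod : T = Metric.ball (0:ℂ) δ ×ˢ Metric.ball (0:ℂ) δ := by
    rw [hTdef]; exact_mod_cast (ball_prod_same (0:ℂ) (0:ℂ) δ).symm
  have hTS : T ⊆ S := hδS
  -- derivative of the inverse on T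
  have hΨd : ∀ q ∈ T, ∃ (hne : pdx xt (F.symm q) ≠ 0),
      HasFDerivAt F.symm
        (((cle (pdx xt (F.symm q)) (pdy xt (F.symm q)) hne).symm : Pt →L[ℂ] Pt)) q := by
    intro q hq
    obtain ⟨hqt, hqW⟩ := hTS hq
    refine ⟨hqW.2, ?_⟩
    refine F.hasFDerivAt_symm hqt ?_
    rw [hFcoe]
    exact hasFDerivAt_Phi (hxt _ hqW.1).differentiableAt hqW.2
  -- f ∘ Ψ has vanishing derivative in the second direction
  have hψd : ∀ q ∈ T, ∃ L : Pt →L[ℂ] ℂ,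
      HasFDerivAt (fun w => f (F.symm w)) L q ∧ L (0,1) = 0 := by
    intro q hq
    obtain ⟨hne, hD⟩ := hΨd q hq
    obtain ⟨hqt, hqU, _⟩ := hTS hq
    set p := F.symm q
    refine ⟨(fderiv ℂ f p).comp
      (((cle (pdx xt p) (pdy xt p) hne).symm : Pt →L[ℂ] Pt)), ?_, ?_⟩
    · exact ((hf p hqU).differentiableAt.hasFDerivAt).comp q hD
    · have hwp := hw p hqU
      simp only [ContinuousLinearMap.coe_comp', Function.comp_apply,
        ContinuousLinearEquiv.coe_coe, cle_symm_apply]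
      rw [fderiv_eval]
      field_simp
      linear_combination -hwp
  -- constancy along the second coordinate
  have hconst : ∀ a ∈ Metric.ball (0:ℂ) δ, ∀ b ∈ Metric.ball (0:ℂ) δ,
      f (F.symm (a, b)) = f (F.symm (a, 0)) := by
    intro a ha b hb
    set γ : ℂ → ℂ := fun s => f (F.symm (a, s)) with hγdef
    have hγd : ∀ s ∈ Metric.ball (0:ℂ) δ, HasFDerivAt γ (0 : ℂ →L[ℂ] ℂ) s := by
      intro s hs
      have hmem : ((a,s) : Pt) ∈ T := by rw [hTprod]; exact ⟨ha, hs⟩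
      obtain ⟨L, hL, hL0⟩ := hψd (a,s) hmem
      have hin : HasDerivAt (fun s : ℂ => ((a, s) : Pt)) (0,1) s :=
        (hasDerivAt_const s a).prodMk (hasDerivAt_id s)
      have := hL.comp_hasDerivAt s hin
      rw [hL0] at this
      have h2 : HasFDerivAt γ (ContinuousLinearMap.smulRight (1 : ℂ →L[ℂ] ℂ) (0:ℂ)) s :=
        hasDerivAt_iff_hasFDerivAt.1 this
      have h3 : ContinuousLinearMap.smulRight (1 : ℂ →L[ℂ] ℂ) (0:ℂ) = 0 := by
        ext; simp
      rwa [h3] at h2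
    have : γ b = γ 0 := by
      refine (convex_ball (0:ℂ) δ).is_const_of_fderivWithin_eq_zero
        (fun s hs => ((hγd s hs).differentiableAt).differentiableWithinAt) ?_ hb
        (Metric.mem_ball_self hδ)
      intro s hs
      rw [fderivWithin_of_isOpen Metric.isOpen_ball hs]
      exact (hγd s hs).fderiv
    exact this
  -- the 1-variable function G and g := G'
  set G : ℂ → ℂ := fun a => f (F.symm (a, 0)) with hGdef
  have hGan : AnalyticOnNhd ℂ G (Metric.ball (0:ℂ) δ) := by
    refine DifferentiableOn.analyticOnNhd (fun a ha => ?_) Metric.isOpen_ball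
    have hmem : ((a,0) : Pt) ∈ T := by rw [hTprod]; exact ⟨ha, Metric.mem_ball_self hδ⟩
    obtain ⟨L, hL, _⟩ := hψd (a,0) hmem
    have hin : DifferentiableAt ℂ (fun a : ℂ => ((a, 0) : Pt)) a :=
      (differentiableAt_id.prodMk (differentiableAt_const 0))
    exact (hL.differentiableAt.comp a hin).differentiableWithinAt
  set g : ℂ → ℂ := deriv G with hgdef
  have hgan : AnalyticOnNhd ℂ g (Metric.ball (0:ℂ) δ) := hGan.deriv
  -- the neighborhood V
  set V : Set Pt := {p | p ∈ U' ∧ pdx xt p ≠ 0 ∧ p ∈ F.source ∧ Φ p ∈ T} with hVdef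
  have hVo : IsOpen V := by
    rw [isOpen_iff_mem_nhds]
    rintro p ⟨h1, h2, h3, h4⟩
    have hc : ContinuousAt (pdx xt) p := (hxt.pdx' p h1).continuousAt
    have hΦc : ContinuousAt Φ p := (hΦan p h1).continuousAt
    filter_upwards [hUo.mem_nhds h1,
      hc.preimage_mem_nhds (isOpen_compl_singleton.mem_nhds (by simpa using h2)),
      F.open_source.mem_nhds h3,
      hΦc.preimage_mem_nhds (Metric.isOpen_ball.mem_nhds h4)] with q a1 a2 a3 a4
    exact ⟨a1, a2, a3, a4⟩
  have h0V : (0:Pt) ∈ V := ⟨h0, hα, hFs, by rw [hΦ00]; exact Metric.mem_ball_self hδ⟩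
  -- f = G ∘ xt on V
  have hfeq : ∀ p ∈ V, f p = G (xt p) := by
    rintro p ⟨h1, _, h3, h4⟩
    have hli : F.symm (Φ p) = p := by
      have := F.left_inv h3; rwa [hFcoe] at this
    have hmem : Φ p ∈ Metric.ball (0:ℂ) δ ×ˢ Metric.ball (0:ℂ) δ := by rw [← hTprod]; exact h4
    have := hconst (xt p) hmem.1 p.2 hmem.2
    calc f p = f (F.symm (xt p, p.2)) := by rw [show ((xt p, p.2) : Pt) = Φ p from rfl, hli]
      _ = f (F.symm (xt p, 0)) := this
      _ = G (xt p) := rfl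
  refine ⟨V, hVo, h0V, fun p hp => hp.1, Metric.ball (0:ℂ) δ, Metric.isOpen_ball,
    Metric.mem_ball_self hδ, g, hgan, ?_, ?_⟩
  · rintro p ⟨h1, h2, h3, h4⟩
    have hmem : Φ p ∈ Metric.ball (0:ℂ) δ ×ˢ Metric.ball (0:ℂ) δ := by rw [← hTprod]; exact h4
    exact hmem.1
  · rintro p hp
    obtain ⟨h1, h2, h3, h4⟩ := hp
    have hmem : Φ p ∈ Metric.ball (0:ℂ) δ ×ˢ Metric.ball (0:ℂ) δ := by rw [← hTprod]; exact h4
    have hxtp : xt p ∈ Metric.ball (0:ℂ) δ := hmem.1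
    have hGa : HasDerivAt G (g (xt p)) (xt p) :=
      (hGan (xt p) hxtp).differentiableAt.hasDerivAt
    have hcomp : HasFDerivAt (fun q => G (xt q)) (g (xt p) • fderiv ℂ xt p) p :=
      hGa.comp_hasFDerivAt p (hxt p h1).differentiableAt.hasFDerivAt
    have hev : f =ᶠ[𝓝 p] fun q => G (xt q) := by
      filter_upwards [hVo.mem_nhds ⟨h1, h2, h3, h4⟩] with q hq using hfeq q hq
    have hfd : fderiv ℂ f p = g (xt p) • fderiv ℂ xt p := by
      rw [hev.fderiv_eq, hcomp.fderiv]
    constructor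
    · rw [pdx, hfd]; simp [pdx]
    · rw [pdy, hfd]; simp [pdy]

/-- swap as a continuous linear equivalence -/
noncomputable def swapE : Pt ≃L[ℂ] Pt := ContinuousLinearEquiv.prodComm ℂ ℂ ℂ

@[simp] lemma swapE_apply (v : Pt) : swapE v = (v.2, v.1) := rfl

lemma pd_comp_swap {h : Pt → ℂ} {p : Pt} (hd : DifferentiableAt ℂ h (p.2, p.1)) :
    pdx (fun q : Pt => h (q.2, q.1)) p = pdy h (p.2, p.1) ∧
    pdy (fun q : Pt => h (q.2, q.1)) p = pdx h (p.2, p.1) := by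
  have hs : HasFDerivAt (swapE : Pt → Pt) ((swapE : Pt →L[ℂ] Pt)) p :=
    (swapE : Pt →L[ℂ] Pt).hasFDerivAt
  have hc : HasFDerivAt (fun q : Pt => h (q.2, q.1))
      ((fderiv ℂ h (p.2, p.1)).comp (swapE : Pt →L[ℂ] Pt)) p := by
    have := (hd.hasFDerivAt).comp p hs
    exact this
  constructor
  · rw [pdx, hc.fderiv]
    simp [pdy]
  · rw [pdy, hc.fderiv]
    simp [pdx]

lemma key2 {f xt : Pt → ℂ} {U' : Set Pt} (hUo : IsOpen U') (h0 : (0:Pt) ∈ U')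
    (hf : AnalyticOnNhd ℂ f U') (hxt : AnalyticOnNhd ℂ xt U') (hxt0 : xt 0 = 0)
    (hw : ∀ p ∈ U', pdx f p * pdy xt p - pdy f p * pdx xt p = 0)
    (hα : (pdx xt 0, pdy xt 0) ≠ (0, 0)) :
    ∃ V, IsOpen V ∧ (0:Pt) ∈ V ∧ V ⊆ U' ∧ ∃ D : Set ℂ, IsOpen D ∧ (0:ℂ) ∈ D ∧
      ∃ g : ℂ → ℂ, AnalyticOnNhd ℂ g D ∧ (∀ p ∈ V, xt p ∈ D) ∧
      ∀ p ∈ V, pdx f p = g (xt p) * pdx xt p ∧ pdy f p = g (xt p) * pdy xt p := by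
  by_cases hx : pdx xt 0 ≠ 0
  · exact key hUo h0 hf hxt hxt0 hw hx
  · push_neg at hx
    have hy : pdy xt 0 ≠ 0 := by
      intro h; exact hα (by rw [hx, h])
    -- swap coordinates
    set σ : Pt → Pt := fun q => (q.2, q.1) with hσdef
    have hσan : ∀ p : Pt, AnalyticAt ℂ σ p := fun p => analyticAt_snd.prod analyticAt_fst
    set U'' : Set Pt := σ ⁻¹' U' with hU''def
    have hU''o : IsOpen U'' := hUo.preimage (continuous_snd.prodMk continuous_fst)
    have h0'' : (0:Pt) ∈ U'' := by
      show σ 0 ∈ U'; exact h0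
    have hσσ : ∀ p : Pt, σ (σ p) = p := fun p => rfl
    have hfan : AnalyticOnNhd ℂ (fun q => f (σ q)) U'' := fun p hp =>
      (hf (σ p) hp).comp (hσan p)
    have hxtan : AnalyticOnNhd ℂ (fun q => xt (σ q)) U'' := fun p hp =>
      (hxt (σ p) hp).comp (hσan p)
    have hw' : ∀ p ∈ U'', pdx (fun q => xt (σ q)) p ≠ 0 → True := fun _ _ _ => trivial
    have hxt0' : xt (σ 0) = 0 := by
      have : σ (0:Pt) = 0 := rfl
      rw [this, hxt0]
    have hswf : ∀ p ∈ U'', pdx (fun q : Pt => f (q.2, q.1)) p = pdy f (σ p) ∧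
        pdy (fun q : Pt => f (q.2, q.1)) p = pdx f (σ p) := fun p hp =>
      pd_comp_swap (hf (σ p) hp).differentiableAt
    have hswxt : ∀ p ∈ U'', pdx (fun q : Pt => xt (q.2, q.1)) p = pdy xt (σ p) ∧
        pdy (fun q : Pt => xt (q.2, q.1)) p = pdx xt (σ p) := fun p hp =>
      pd_comp_swap (hxt (σ p) hp).differentiableAt
    have hw'' : ∀ p ∈ U'', pdx (fun q => f (σ q)) p * pdy (fun q => xt (σ q)) p
        - pdy (fun q => f (σ q)) p * pdx (fun q => xt (σ q)) p = 0 := by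
      intro p hp
      rw [(hswf p hp).1, (hswf p hp).2, (hswxt p hp).1, (hswxt p hp).2]
      have := hw (σ p) hp
      linear_combination -this
    have hα' : pdx (fun q => xt (σ q)) 0 ≠ 0 := by
      rw [(hswxt 0 h0'').1]
      have : σ (0:Pt) = 0 := rfl
      rw [this]; exact hy
    obtain ⟨V', hV'o, h0V', hV'U, D, hDo, h0D, g, hg, hxtD, hmain⟩ :=
      key hU''o h0'' hfan hxtan hxt0' hw'' hα'
    refine ⟨σ ⁻¹' V', hV'o.preimage (continuous_snd.prodMk continuous_fst), ?_, ?_,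
      D, hDo, h0D, g, hg, ?_, ?_⟩
    · show σ 0 ∈ V'; exact h0V'
    · intro p hp
      have := hV'U hp
      exact this
    · intro p hp
      have := hxtD (σ p) hp
      simpa using this
    · intro p hp
      obtain ⟨e1, e2⟩ := hmain (σ p) hp
      have hU'p : σ p ∈ U'' := hV'U hp
      rw [(hswf (σ p) hU'p).1, (hswxt (σ p) hU'p).1, hσσ] at e1
      rw [(hswf (σ p) hU'p).2, (hswxt (σ p) hU'p).2, hσσ] at e2
      exact ⟨e2, e1⟩

/-- With `W` a `k`-web on a polydisc `U`, `X = (P,Q)` a transverse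
infinitesimal automorphism, `u_i` the canonical first integrals and `x̃` a first integral
of `X`, for every pair `i ≠ j` there is, near `0`, a holomorphic `g` with
`du_i − du_j = (g∘x̃)·dx̃`; in particular `(du_i, −du_j, −(g∘x̃)·dx̃)` is an abelian
relation of the 3-web `(ω_i, ω_j, ω_{k+1})`, where `ω_{k+1} = (−Q, P)`. -/
theorem stmt_7 (k : ℕ) (U : Set Pt) (hU : IsPolydisc U) (ω : Fin k → Form1)
    (hweb : IsWeb ω U) (P Q : Pt → ℂ)
    (hP : AnalyticOnNhd ℂ P U) (hQ : AnalyticOnNhd ℂ Q U)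
    (hinf : IsInfAut P Q ω U) (htr : IsTransverseTo P Q ω U)
    (u : Fin k → Pt → ℂ) (hu : ∀ i, IsCanonicalFI P Q (ω i) (u i) U)
    (xt : Pt → ℂ) (hxt : AnalyticOnNhd ℂ xt U) (hxt0 : xt 0 = 0)
    (hXxt : ∀ p ∈ U, Xf P Q xt p = 0) (hdxt0 : (pdx xt 0, pdy xt 0) ≠ (0, 0))
    (i j : Fin k) (hij : i ≠ j) :
    ∃ V ∈ 𝓝 (0 : Pt), V ⊆ U ∧ ∃ D ∈ 𝓝 (0 : ℂ), ∃ g : ℂ → ℂ, AnalyticOnNhd ℂ g D ∧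
      (∀ p ∈ V, xt p ∈ D) ∧
      (∀ p ∈ V, pdx (u i) p - pdx (u j) p = g (xt p) * pdx xt p ∧
                pdy (u i) p - pdy (u j) p = g (xt p) * pdy xt p) ∧
      IsAbelianRelOn ![ω i, ω j, (fun p => -Q p, P)]
        ![fd (u i), (fun p => -pdx (u j) p, fun p => -pdy (u j) p),
          (fun p => -(g (xt p) * pdx xt p), fun p => -(g (xt p) * pdy xt p))] V := by
  obtain ⟨r, s, hr, hs, hUeq⟩ := hU
  have hUo : IsOpen U := by rw [hUeq]; exact Metric.isOpen_ball.prod Metric.isOpen_ball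
  have h0U : (0:Pt) ∈ U := by
    rw [hUeq]; exact ⟨Metric.mem_ball_self hr, Metric.mem_ball_self hs⟩
  set f : Pt → ℂ := fun p => u i p - u j p with hfdef
  have hfan : AnalyticOnNhd ℂ f U := fun p hp => ((hu i).1 p hp).sub ((hu j).1 p hp)
  have hdiff : ∀ l : Fin k, ∀ p ∈ U, DifferentiableAt ℂ (u l) p := fun l p hp =>
    ((hu l).1 p hp).differentiableAt
  have hfs : ∀ p ∈ U, pdx f p = pdx (u i) p - pdx (u j) p ∧
      pdy f p = pdy (u i) p - pdy (u j) p := by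
    intro p hp
    have h := fderiv_fun_sub (hdiff i p hp) (hdiff j p hp)
    constructor
    · rw [pdx, hfdef]; rw [h]; simp [pdx]
    · rw [pdy, hfdef]; rw [h]; simp [pdy]
  -- X(u_l) = 1 on U
  have hone : ∀ l : Fin k, ∀ p ∈ U,
      P p * ((ω l).1 p / contr P Q (ω l) p) + Q p * ((ω l).2 p / contr P Q (ω l) p) = 1 := by
    intro l p hp
    have hc : contr P Q (ω l) p ≠ 0 := htr l p hp
    have hce : contr P Q (ω l) p = (ω l).1 p * P p + (ω l).2 p * Q p := rfl
    field_simp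
    linear_combination -hce
  -- X(f) = 0 on U
  have e1 : ∀ p ∈ U, P p * pdx f p + Q p * pdy f p = 0 := by
    intro p hp
    obtain ⟨hx1, hy1⟩ := (hu i).2.2 p hp
    obtain ⟨hx2, hy2⟩ := (hu j).2.2 p hp
    rw [(hfs p hp).1, (hfs p hp).2, hx1, hx2, hy1, hy2]
    linear_combination hone i p hp - hone j p hp
  -- X(xt) = 0 on U
  have e2 : ∀ p ∈ U, P p * pdx xt p + Q p * pdy xt p = 0 := by
    intro p hp
    have := hXxt p hp
    rwa [Xf] at this
  -- (P,Q) nonvanishing on U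
  have hPQ : ∀ p ∈ U, P p ≠ 0 ∨ Q p ≠ 0 := by
    intro p hp
    by_contra h
    push_neg at h
    have hc1 := htr i p hp
    rw [contr, h.1, h.2] at hc1
    simp at hc1
  -- df ∧ dxt = 0 on U
  have hw : ∀ p ∈ U, pdx f p * pdy xt p - pdy f p * pdx xt p = 0 := by
    intro p hp
    rcases hPQ p hp with hP | hQ
    · have h : P p * (pdx f p * pdy xt p - pdy f p * pdx xt p) = 0 := by
        linear_combination pdy xt p * e1 p hp - pdy f p * e2 p hp
      rcases mul_eq_zero.mp h with h' | h'
      · exact absurd h' hP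
      · exact h'
    · have h : Q p * (pdx f p * pdy xt p - pdy f p * pdx xt p) = 0 := by
        linear_combination pdx f p * e2 p hp - pdx xt p * e1 p hp
      rcases mul_eq_zero.mp h with h' | h'
      · exact absurd h' hQ
      · exact h'
  obtain ⟨V, hVo, h0V, hVU, D, hDo, h0D, g, hg, hxtD, hmain⟩ :=
    key2 hUo h0U hfan hxt hxt0 hw hdxt0
  have hmain' : ∀ p ∈ V, pdx (u i) p - pdx (u j) p = g (xt p) * pdx xt p ∧
      pdy (u i) p - pdy (u j) p = g (xt p) * pdy xt p := by
    intro p hp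
    obtain ⟨m1, m2⟩ := hmain p hp
    rw [(hfs p (hVU hp)).1] at m1
    rw [(hfs p (hVU hp)).2] at m2
    exact ⟨m1, m2⟩
  refine ⟨V, hVo.mem_nhds h0V, hVU, D, hDo.mem_nhds h0D, g, hg, hxtD, hmain', ?_⟩
  -- auxiliary analyticity facts on V
  have hai1 : AnalyticOnNhd ℂ (pdx (u i)) U := (hu i).1.pdx'
  have hai2 : AnalyticOnNhd ℂ (pdy (u i)) U := (hu i).1.pdy'
  have haj1 : AnalyticOnNhd ℂ (pdx (u j)) U := (hu j).1.pdx'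
  have haj2 : AnalyticOnNhd ℂ (pdy (u j)) U := (hu j).1.pdy'
  have hg1 : ∀ p ∈ V, AnalyticAt ℂ (fun q => -(g (xt q) * pdx xt q)) p := fun p hp =>
    ((((hg (xt p) (hxtD p hp)).comp (hxt p (hVU hp))).mul
      (hxt.pdx' p (hVU hp)))).neg
  have hg2 : ∀ p ∈ V, AnalyticAt ℂ (fun q => -(g (xt q) * pdy xt q)) p := fun p hp =>
    ((((hg (xt p) (hxtD p hp)).comp (hxt p (hVU hp))).mul
      (hxt.pdy' p (hVU hp)))).neg
  -- eventual equality for the third form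
  have hev1 : ∀ p ∈ V, (fun q => -(g (xt q) * pdx xt q)) =ᶠ[𝓝 p]
      (fun q => pdx (u j) q - pdx (u i) q) := by
    intro p hp
    filter_upwards [hVo.mem_nhds hp] with q hq
    have := (hmain' q hq).1
    linear_combination this
  have hev2 : ∀ p ∈ V, (fun q => -(g (xt q) * pdy xt q)) =ᶠ[𝓝 p]
      (fun q => pdy (u j) q - pdy (u i) q) := by
    intro p hp
    filter_upwards [hVo.mem_nhds hp] with q hq
    have := (hmain' q hq).2
    linear_combination this
  refine ⟨?_, ?_, ?_, ?_, ?_⟩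
  · -- analytic
    intro l
    fin_cases l
    · exact ⟨fun p hp => hai1 p (hVU hp), fun p hp => hai2 p (hVU hp)⟩
    · exact ⟨fun p hp => (haj1 p (hVU hp)).neg, fun p hp => (haj2 p (hVU hp)).neg⟩
    · exact ⟨fun p hp => hg1 p hp, fun p hp => hg2 p hp⟩
  · -- closed
    intro l
    fin_cases l
    · intro p hp
      exact pdy_pdx_comm ((hu i).1 p (hVU hp))
    · intro p hp
      show pdy (fun q => -pdx (u j) q) p = pdx (fun q => -pdy (u j) q) p
      rw [pdy, fderiv_fun_neg, pdx, fderiv_fun_neg]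
      simp only [ContinuousLinearMap.neg_apply, neg_inj]
      exact pdy_pdx_comm ((hu j).1 p (hVU hp))
    · intro p hp
      show pdy (fun q => -(g (xt q) * pdx xt q)) p = pdx (fun q => -(g (xt q) * pdy xt q)) p
      rw [pdy, (hev1 p hp).fderiv_eq, ← pdy]
      rw [pdx, (hev2 p hp).fderiv_eq, ← pdx]
      have d1 : DifferentiableAt ℂ (pdx (u j)) p := (haj1 p (hVU hp)).differentiableAt
      have d2 : DifferentiableAt ℂ (pdx (u i)) p := (hai1 p (hVU hp)).differentiableAt
      have d3 : DifferentiableAt ℂ (pdy (u j)) p := (haj2 p (hVU hp)).differentiableAt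
      have d4 : DifferentiableAt ℂ (pdy (u i)) p := (hai2 p (hVU hp)).differentiableAt
      have s1 : pdy (fun q => pdx (u j) q - pdx (u i) q) p =
          pdy (pdx (u j)) p - pdy (pdx (u i)) p := by
        rw [pdy, fderiv_fun_sub d1 d2]; simp [pdy]
      have s2 : pdx (fun q => pdy (u j) q - pdy (u i) q) p =
          pdx (pdy (u j)) p - pdx (pdy (u i)) p := by
        rw [pdx, fderiv_fun_sub d3 d4]; simp [pdx]
      rw [s1, s2, pdy_pdx_comm ((hu j).1 p (hVU hp)), pdy_pdx_comm ((hu i).1 p (hVU hp))]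
  · -- tangent
    intro l
    fin_cases l
    · intro p hp
      obtain ⟨hx1, hy1⟩ := (hu i).2.2 p (hVU hp)
      show pdx (u i) p * (ω i).2 p - pdy (u i) p * (ω i).1 p = 0
      rw [hx1, hy1]
      ring
    · intro p hp
      obtain ⟨hx2, hy2⟩ := (hu j).2.2 p (hVU hp)
      show -pdx (u j) p * (ω j).2 p - -pdy (u j) p * (ω j).1 p = 0
      rw [hx2, hy2]
      ring
    · intro p hp
      have := e2 p (hVU hp)
      simp only [wedge]
      show -(g (xt p) * pdx xt p) * P p - -(g (xt p) * pdy xt p) * -Q p = 0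
      linear_combination (-(g (xt p))) * this
  · -- sum_fst
    intro p hp
    rw [Fin.sum_univ_three]
    show pdx (u i) p + -pdx (u j) p + -(g (xt p) * pdx xt p) = 0
    linear_combination (hmain' p hp).1
  · -- sum_snd
    intro p hp
    rw [Fin.sum_univ_three]
    show pdy (u i) p + -pdy (u j) p + -(g (xt p) * pdy xt p) = 0
    linear_combination (hmain' p hp).2
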